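/- Let T be a finite set and w : T × T → ℝ a weight function. Let y^L, y^R : T → ℕ be degree functions and let B be a b-matching consistent with (y^L, y^R); write M_B = {e ∈ T × T : B(e) ≥ 1} for the support of B. Then the following two statements are equivalent: (1) B has minimum weight among all b-matchings consistent with (y^L, y^R); (2) for every cycle γ in the complete bipartite graph with parts (T,T) whose two alternating matchings have different weights, w(M_LR^γ) ≠ w(M_RL^γ), the heavier of the two matchings M_LR^γ and M_RL^γ is not contained in M_B. -/

import Mathlib

open scoped Classical

/-- A cycle in the complete bipartite graph with both parts equal to `T`:
an alternating sequence of `len ≥ 1` distinct left vertices and `len` distinct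
right vertices. -/
structure BipCycle (T : Type*) where
  len : ℕ
  one_le_len : 1 ≤ len
  left : Fin len → T
  right : Fin len → T
  left_inj : Function.Injective left
  right_inj : Function.Injective right

/-- The matching `M_LR^γ = {(c_i^L, c_i^R) : 1 ≤ i ≤ ℓ}` of a cycle `γ`. -/
noncomputable def BipCycle.MLR {T : Type*} (γ : BipCycle T) : Finset (T × T) :=
  Finset.image (fun i => (γ.left i, γ.right i)) Finset.univ

/-- The matching `M_RL^γ = {(c_{i+1 mod ℓ}^L, c_i^R) : 1 ≤ i ≤ ℓ}` of a cycle `γ`. -/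
noncomputable def BipCycle.MRL {T : Type*} (γ : BipCycle T) : Finset (T × T) :=
  Finset.image (fun i => (γ.left (finRotate γ.len i), γ.right i)) Finset.univ

section AuxLemmas
set_option linter.unusedSectionVars false
set_option linter.unusedVariables false
variable {T : Type*} [Fintype T]

lemma count_image_aux {ℓ : ℕ} (f : Fin ℓ → T × T) (hf : Function.Injective f) (e : T × T) :
    (∑ i : Fin ℓ, if f i = e then (1 : ℕ) else 0)
      = if e ∈ Finset.image f Finset.univ then 1 else 0 := by
  by_cases h : e ∈ Finset.image f Finset.univ
  · obtain ⟨i0, -, rfl⟩ := Finset.mem_image.1 h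
    rw [if_pos h]
    have hiff : ∀ i : Fin ℓ, (f i = f i0) = (i = i0) := fun i => by
      simp [hf.eq_iff]
    simp only [hiff]
    simp
  · rw [if_neg h]
    apply Finset.sum_eq_zero
    intro i _
    rw [if_neg]
    intro hfe
    exact h (hfe ▸ Finset.mem_image_of_mem f (Finset.mem_univ i))

lemma exists_gt_of_sum_eq {f g : T → ℕ} (h : ∑ t, f t = ∑ t, g t) {t0 : T}
    (hlt : f t0 < g t0) : ∃ t, g t < f t := by
  by_contra hc
  push_neg at hc
  have : ∑ t, f t < ∑ t, g t :=
    Finset.sum_lt_sum (fun t _ => hc t) ⟨t0, Finset.mem_univ t0, hlt⟩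
  omega

lemma sum_pair_indicator (a b t : T) :
    (∑ r' : T, if (a, b) = (t, r') then (1 : ℕ) else 0) = if a = t then 1 else 0 := by
  by_cases h : a = t
  · subst h
    simp [Prod.ext_iff]
  · simp [Prod.ext_iff, h]

lemma sum_pair_indicator' (a b t : T) :
    (∑ r' : T, if (b, a) = (r', t) then (1 : ℕ) else 0) = if a = t then 1 else 0 := by
  by_cases h : a = t
  · subst h
    simp [Prod.ext_iff]
  · simp [Prod.ext_iff, h]

/-- The swap lemma: modify `X` by adding the matching `M1` and removing `M2`;
this preserves all row and column sums and changes the weight by `w(M1) - w(M2)`. -/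
lemma swap_lemma (w : T × T → ℝ) {ℓ : ℕ} (left right : Fin ℓ → T)
    (hl : Function.Injective left) (hr : Function.Injective right)
    (σ : Equiv.Perm (Fin ℓ)) (X : T × T → ℕ)
    (hX : ∀ i, 1 ≤ X (left (σ i), right i)) :
    ∃ X' : T × T → ℕ,
    (∀ e : T × T, X' e = X e
        + (if e ∈ Finset.image (fun i => (left i, right i)) Finset.univ then 1 else 0)
        - (if e ∈ Finset.image (fun i => (left (σ i), right i)) Finset.univ then 1 else 0)) ∧
    (∀ t, ∑ r : T, X' (t, r) = ∑ r : T, X (t, r)) ∧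
    (∀ t, ∑ r : T, X' (r, t) = ∑ r : T, X (r, t)) ∧
    (∑ e : T × T, (X' e : ℝ) * w e
      = ∑ e : T × T, (X e : ℝ) * w e
        + ∑ e ∈ Finset.image (fun i => (left i, right i)) Finset.univ, w e
        - ∑ e ∈ Finset.image (fun i => (left (σ i), right i)) Finset.univ, w e) := by
  set f1 : Fin ℓ → T × T := fun i => (left i, right i) with hf1
  set f2 : Fin ℓ → T × T := fun i => (left (σ i), right i) with hf2
  have hf1inj : Function.Injective f1 := fun a b h => hr (congrArg Prod.snd h)
  have hf2inj : Function.Injective f2 := fun a b h => hr (congrArg Prod.snd h)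
  set M1 := Finset.image f1 Finset.univ with hM1
  set M2 := Finset.image f2 Finset.univ with hM2
  set n1 : T × T → ℕ := fun e => if e ∈ M1 then 1 else 0 with hn1
  set n2 : T × T → ℕ := fun e => if e ∈ M2 then 1 else 0 with hn2
  have hsub : ∀ e, n2 e ≤ X e + n1 e := by
    intro e
    by_cases h : e ∈ M2
    · obtain ⟨i, -, rfl⟩ := Finset.mem_image.1 h
      have hXe : 1 ≤ X (f2 i) := hX i
      simp only [hn2, if_pos h]
      omega
    · simp [hn2, h]
  have hkey : ∀ e, (X e + n1 e - n2 e) + n2 e = X e + n1 e := by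
    intro e
    have := hsub e
    omega
  have hc1 : ∀ e, n1 e = ∑ i : Fin ℓ, if f1 i = e then 1 else 0 := by
    intro e; rw [count_image_aux f1 hf1inj e]
  have hc2 : ∀ e, n2 e = ∑ i : Fin ℓ, if f2 i = e then 1 else 0 := by
    intro e; rw [count_image_aux f2 hf2inj e]
  have hrow : ∀ t, (∑ r : T, n1 (t, r)) = ∑ r : T, n2 (t, r) := by
    intro t
    simp only [hc1, hc2]
    rw [Finset.sum_comm, Finset.sum_comm (s := Finset.univ) (t := Finset.univ)
      (f := fun r i => if f2 i = (t, r) then (1:ℕ) else 0)]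
    have h1 : ∀ i : Fin ℓ, (∑ r : T, if f1 i = (t, r) then (1:ℕ) else 0)
        = if left i = t then 1 else 0 := fun i => sum_pair_indicator _ _ _
    have h2 : ∀ i : Fin ℓ, (∑ r : T, if f2 i = (t, r) then (1:ℕ) else 0)
        = if left (σ i) = t then 1 else 0 := fun i => sum_pair_indicator _ _ _
    simp only [h1, h2]
    exact (Equiv.sum_comp σ (fun i => if left i = t then (1:ℕ) else 0)).symm
  have hcol : ∀ t, (∑ r : T, n1 (r, t)) = ∑ r : T, n2 (r, t) := by
    intro t
    simp only [hc1, hc2]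
    rw [Finset.sum_comm, Finset.sum_comm (s := Finset.univ) (t := Finset.univ)
      (f := fun r i => if f2 i = (r, t) then (1:ℕ) else 0)]
    have h1 : ∀ i : Fin ℓ, (∑ r : T, if f1 i = (r, t) then (1:ℕ) else 0)
        = if right i = t then 1 else 0 := fun i => sum_pair_indicator' _ _ _
    have h2 : ∀ i : Fin ℓ, (∑ r : T, if f2 i = (r, t) then (1:ℕ) else 0)
        = if right i = t then 1 else 0 := fun i => sum_pair_indicator' _ _ _
    simp only [h1, h2]
  refine ⟨fun e => X e + n1 e - n2 e, fun e => rfl, ?_, ?_, ?_⟩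
  · intro t
    have := hrow t
    have hsum : (∑ r : T, (X (t, r) + n1 (t, r) - n2 (t, r))) + ∑ r : T, n2 (t, r)
        = ∑ r : T, X (t, r) + ∑ r : T, n1 (t, r) := by
      rw [← Finset.sum_add_distrib, ← Finset.sum_add_distrib]
      exact Finset.sum_congr rfl (fun r _ => hkey (t, r))
    beta_reduce
    omega
  · intro t
    have := hcol t
    have hsum : (∑ r : T, (X (r, t) + n1 (r, t) - n2 (r, t))) + ∑ r : T, n2 (r, t)
        = ∑ r : T, X (r, t) + ∑ r : T, n1 (r, t) := by
      rw [← Finset.sum_add_distrib, ← Finset.sum_add_distrib]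
      exact Finset.sum_congr rfl (fun r _ => hkey (r, t))
    beta_reduce
    omega
  · have hcast : ∀ e : T × T, ((X e + n1 e - n2 e : ℕ) : ℝ)
        = (X e : ℝ) + (n1 e : ℝ) - (n2 e : ℝ) := by
      intro e
      have := hkey e
      have h2 : ((X e + n1 e - n2 e : ℕ) : ℝ) + (n2 e : ℝ) = (X e : ℝ) + (n1 e : ℝ) := by
        exact_mod_cast congrArg (Nat.cast : ℕ → ℝ) this
      linarith
    calc ∑ e : T × T, ((X e + n1 e - n2 e : ℕ) : ℝ) * w e
        = ∑ e : T × T, ((X e : ℝ) * w e + (n1 e : ℝ) * w e - (n2 e : ℝ) * w e) := by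
          refine Finset.sum_congr rfl (fun e _ => ?_)
          rw [hcast e]; ring
      _ = ∑ e : T × T, (X e : ℝ) * w e + ∑ e : T × T, (n1 e : ℝ) * w e
            - ∑ e : T × T, (n2 e : ℝ) * w e := by
          rw [Finset.sum_sub_distrib, Finset.sum_add_distrib]
      _ = ∑ e : T × T, (X e : ℝ) * w e + ∑ e ∈ M1, w e - ∑ e ∈ M2, w e := by
          congr 1
          · congr 1
            rw [← Finset.sum_filter_add_sum_filter_not Finset.univ (· ∈ M1)]
            have : ∀ e ∈ Finset.univ.filter (· ∉ M1), (n1 e : ℝ) * w e = 0 := by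
              intro e he
              simp only [Finset.mem_filter] at he
              simp [hn1, he.2]
            rw [Finset.sum_eq_zero this, add_zero]
            have hfil : Finset.univ.filter (· ∈ M1) = M1 := by
              ext e; simp
            rw [hfil]
            refine Finset.sum_congr rfl (fun e he => ?_)
            simp [hn1, he]
          · rw [← Finset.sum_filter_add_sum_filter_not Finset.univ (· ∈ M2)]
            have : ∀ e ∈ Finset.univ.filter (· ∉ M2), (n2 e : ℝ) * w e = 0 := by
              intro e he
              simp only [Finset.mem_filter] at he
              simp [hn2, he.2]
            rw [Finset.sum_eq_zero this, add_zero]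
            have hfil : Finset.univ.filter (· ∈ M2) = M2 := by
              ext e; simp
            rw [hfil]
            refine Finset.sum_congr rfl (fun e he => ?_)
            simp [hn2, he]

lemma finRotate_val {ℓ : ℕ} (hℓ : 2 ≤ ℓ) (k : Fin ℓ) :
    ((finRotate ℓ) k).1 = (k.1 + 1) % ℓ := by
  obtain ⟨m, rfl⟩ : ∃ m, ℓ = m + 1 := ⟨ℓ - 1, by omega⟩
  rw [finRotate_succ_apply, Fin.val_add]
  have h1 : ((1 : Fin (m + 1)) : ℕ) = 1 := by
    rw [Fin.val_one']
    exact Nat.mod_eq_of_lt (by omega)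
  rw [h1]

/-- If two functions with equal row and column sums differ, there is an
alternating cycle on which `B` strictly exceeds `B'` along `MLR` and
`B'` strictly exceeds `B` along `MRL`. -/
lemma exists_alt_cycle (B B' : T × T → ℕ)
    (hrow : ∀ t, ∑ r : T, B (t, r) = ∑ r : T, B' (t, r))
    (hcol : ∀ t, ∑ r : T, B (r, t) = ∑ r : T, B' (r, t))
    (hne : B ≠ B') :
    ∃ γ : BipCycle T,
      (∀ i, B' (γ.left i, γ.right i) < B (γ.left i, γ.right i)) ∧
      (∀ i, B (γ.left (finRotate γ.len i), γ.right i)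
            < B' (γ.left (finRotate γ.len i), γ.right i)) := by
  have step1 : ∃ e : T × T, B' e < B e := by
    have : ∃ e, B e ≠ B' e := by
      by_contra hc; push_neg at hc; exact hne (funext hc)
    obtain ⟨⟨t, r⟩, hne'⟩ := this
    rcases Nat.lt_or_ge (B' (t, r)) (B (t, r)) with h | h
    · exact ⟨(t, r), h⟩
    · have hlt : B (t, r) < B' (t, r) := by omega
      obtain ⟨r', hr'⟩ := exists_gt_of_sum_eq (f := fun r => B (t, r))
        (g := fun r => B' (t, r)) (hrow t) hlt
      exact ⟨(t, r'), hr'⟩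
  have step : ∀ e : {e : T × T // B' e < B e},
      ∃ e' : {e : T × T // B' e < B e},
        B (e'.1.1, e.1.2) < B' (e'.1.1, e.1.2) := by
    rintro ⟨⟨t, r⟩, he⟩
    obtain ⟨t1, ht1⟩ := exists_gt_of_sum_eq (f := fun t' => B' (t', r))
      (g := fun t' => B (t', r)) (hcol r).symm he
    obtain ⟨r1, hr1⟩ := exists_gt_of_sum_eq (f := fun r' => B (t1, r'))
      (g := fun r' => B' (t1, r')) (hrow t1) ht1
    exact ⟨⟨(t1, r1), hr1⟩, ht1⟩
  choose F hF using step
  obtain ⟨e0, he0⟩ := step1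
  set seq : ℕ → {e : T × T // B' e < B e} := fun n => F^[n] ⟨e0, he0⟩ with hseqdef
  set t : ℕ → T := fun n => (seq n).1.1 with htdef
  set r : ℕ → T := fun n => (seq n).1.2 with hrdef
  have hB : ∀ n, B' (t n, r n) < B (t n, r n) := fun n => (seq n).2
  have hseq : ∀ n, seq (n + 1) = F (seq n) := fun n =>
    Function.iterate_succ_apply' F n _
  have hB' : ∀ n, B (t (n + 1), r n) < B' (t (n + 1), r n) := by
    intro n
    have h := hF (seq n)
    rw [← hseq n] at h
    exact h
  have hadj_t : ∀ n, t (n + 1) ≠ t n := by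
    intro n h
    have h1 := hB n
    have h2 := hB' n
    rw [h] at h2
    omega
  have hadj_r : ∀ n, r (n + 1) ≠ r n := by
    intro n h
    have h1 := hB (n + 1)
    have h2 := hB' n
    rw [← h] at h2
    omega
  have hex : ∃ j, ∃ i < j, (t i = t j ∨ r i = r j) := by
    obtain ⟨a, b, hab, heq⟩ := Finite.exists_ne_map_eq_of_infinite t
    rcases Nat.lt_or_ge a b with h | h
    · exact ⟨b, a, h, Or.inl heq⟩
    · exact ⟨a, b, by omega, Or.inl heq.symm⟩
  set j0 := Nat.find hex with hj0def
  have hQ : ∃ i < j0, (t i = t j0 ∨ r i = r j0) := Nat.find_spec hex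
  have hmin : ∀ m < j0, ¬ ∃ i < m, (t i = t m ∨ r i = r m) := fun m hm =>
    Nat.find_min hex hm
  have tinj : ∀ a b, a < b → b < j0 → t a ≠ t b := by
    intro a b hab hb h
    exact hmin b hb ⟨a, hab, Or.inl h⟩
  have rinj : ∀ a b, a < b → b < j0 → r a ≠ r b := by
    intro a b hab hb h
    exact hmin b hb ⟨a, hab, Or.inr h⟩
  have tinj' : ∀ a b, a < j0 → b < j0 → t a = t b → a = b := by
    intro a b ha hb h
    rcases lt_trichotomy a b with h' | h' | h'
    · exact absurd h (tinj a b h' hb)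
    · exact h'
    · exact absurd h.symm (tinj b a h' ha)
  have rinj' : ∀ a b, a < j0 → b < j0 → r a = r b → a = b := by
    intro a b ha hb h
    rcases lt_trichotomy a b with h' | h' | h'
    · exact absurd h (rinj a b h' hb)
    · exact h'
    · exact absurd h.symm (rinj b a h' ha)
  by_cases hA : ∃ i < j0, t i = t j0
  · obtain ⟨i, hij, hti⟩ := hA
    have hi2 : i + 1 < j0 := by
      rcases Nat.lt_or_ge (i + 1) j0 with h | h
      · exact h
      · exfalso
        have : i + 1 = j0 := by omega
        exact hadj_t i (this ▸ hti.symm)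
    set ℓ := j0 - i with hℓdef
    have hℓ2 : 2 ≤ ℓ := by omega
    have hlt : ∀ k : Fin ℓ, i + k.1 < j0 := fun k => by
      have := k.2; omega
    refine ⟨⟨ℓ, by omega, fun k => t (i + k.1), fun k => r (i + k.1), ?_, ?_⟩, ?_, ?_⟩
    · intro k k' h
      have := tinj' _ _ (hlt k) (hlt k') h
      exact Fin.ext (by omega)
    · intro k k' h
      have := rinj' _ _ (hlt k) (hlt k') h
      exact Fin.ext (by omega)
    · intro k
      exact hB (i + k.1)
    · intro k
      simp only
      rw [finRotate_val hℓ2 k]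
      rcases Nat.lt_or_ge (k.1 + 1) ℓ with h | h
      · rw [Nat.mod_eq_of_lt h]
        have : i + (k.1 + 1) = (i + k.1) + 1 := by omega
        rw [this]
        exact hB' (i + k.1)
      · have hk2 : (k : ℕ) < ℓ := k.2
        have hk : k.1 + 1 = ℓ := by omega
        rw [hk, Nat.mod_self]
        have h1 : i + 0 = i := by omega
        rw [h1, hti]
        have h2 : j0 = (i + k.1) + 1 := by omega
        rw [h2]
        exact hB' (i + k.1)
  · push_neg at hA
    have hri : ∃ i < j0, r i = r j0 := by
      obtain ⟨i, hij, h⟩ := hQ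
      rcases h with h | h
      · exact absurd h (hA i hij)
      · exact ⟨i, hij, h⟩
    obtain ⟨i, hij, hri⟩ := hri
    have hi2 : i + 1 < j0 := by
      rcases Nat.lt_or_ge (i + 1) j0 with h | h
      · exact h
      · exfalso
        have : i + 1 = j0 := by omega
        exact hadj_r i (this ▸ hri.symm)
    set ℓ := j0 - i with hℓdef
    have hℓ2 : 2 ≤ ℓ := by omega
    have hle : ∀ k : Fin ℓ, i + 1 + k.1 ≤ j0 := fun k => by
      have := k.2; omega
    have tinj'' : ∀ a b, a ≤ j0 → b ≤ j0 → t a = t b → a = b := by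
      intro a b ha hb h
      rcases lt_trichotomy a b with h' | h' | h'
      · rcases Nat.lt_or_ge b j0 with hb' | hb'
        · exact absurd h (tinj a b h' hb')
        · have : b = j0 := by omega
          subst this
          exact absurd h (hA a h')
      · exact h'
      · rcases Nat.lt_or_ge a j0 with ha' | ha'
        · exact absurd h.symm (tinj b a h' ha')
        · have : a = j0 := by omega
          subst this
          exact absurd h.symm (hA b h')
    have rinj'' : ∀ a b, i < a → a ≤ j0 → i < b → b ≤ j0 → r a = r b → a = b := by
      intro a b hia ha hib hb h
      rcases lt_trichotomy a b with h' | h' | h'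
      · rcases Nat.lt_or_ge b j0 with hb' | hb'
        · exact absurd h (rinj a b h' hb')
        · have : b = j0 := by omega
          subst this
          rw [← hri] at h
          rcases Nat.lt_or_ge a j0 with ha' | ha'
          · exact absurd (rinj' a i ha' (by omega) h) (by omega)
          · omega
      · exact h'
      · rcases Nat.lt_or_ge a j0 with ha' | ha'
        · exact absurd h.symm (rinj b a h' ha')
        · have : a = j0 := by omega
          subst this
          rw [← hri] at h
          exact absurd (rinj' b i (by omega) (by omega) h.symm) (by omega)
    refine ⟨⟨ℓ, by omega, fun k => t (i + 1 + k.1), fun k => r (i + 1 + k.1), ?_, ?_⟩, ?_, ?_⟩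
    · intro k k' h
      have := tinj'' _ _ (hle k) (hle k') h
      exact Fin.ext (by omega)
    · intro k k' h
      have := rinj'' _ _ (by omega) (hle k) (by omega) (hle k') h
      exact Fin.ext (by omega)
    · intro k
      exact hB (i + 1 + k.1)
    · intro k
      simp only
      rw [finRotate_val hℓ2 k]
      rcases Nat.lt_or_ge (k.1 + 1) ℓ with h | h
      · rw [Nat.mod_eq_of_lt h]
        have : i + 1 + (k.1 + 1) = (i + 1 + k.1) + 1 := by omega
        rw [this]
        exact hB' (i + 1 + k.1)
      · have hk2 : (k : ℕ) < ℓ := k.2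
        have hk : k.1 + 1 = ℓ := by omega
        rw [hk, Nat.mod_self]
        have h1 : i + 1 + 0 = i + 1 := by omega
        have h2 : i + 1 + k.1 = j0 := by omega
        rw [h1, h2, ← hri]
        exact hB' i

end AuxLemmas

set_option maxHeartbeats 1000000 in
/-- A b-matching `B` consistent with degree functions `(yL, yR)` has minimum weight
among all b-matchings consistent with `(yL, yR)` iff for every cycle `γ` whose two
alternating matchings have different weights, the heavier of the two matchings is
not contained in the support `M_B = {e : B e ≥ 1}`. -/
theorem min_bMatching_iff_no_heavy_cycle {T : Type*} [Fintype T] (w : T × T → ℝ)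
    (yL yR : T → ℕ) (B : T × T → ℕ)
    (hBL : ∀ t : T, ∑ r : T, B (t, r) = yL t)
    (hBR : ∀ t : T, ∑ r : T, B (r, t) = yR t) :
    ((∀ B' : T × T → ℕ,
        (∀ t : T, ∑ r : T, B' (t, r) = yL t) →
        (∀ t : T, ∑ r : T, B' (r, t) = yR t) →
        ∑ e : T × T, (B e : ℝ) * w e ≤ ∑ e : T × T, (B' e : ℝ) * w e)
      ↔
      (∀ γ : BipCycle T, (∑ e ∈ γ.MLR, w e) ≠ (∑ e ∈ γ.MRL, w e) →
        ¬ (∀ e ∈ (if (∑ e ∈ γ.MRL, w e) < (∑ e ∈ γ.MLR, w e) then γ.MLR else γ.MRL),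
            1 ≤ B e))) := by
  constructor
  · -- minimality implies no heavy cycle in the support
    intro hmin γ hwne hsupp
    have hMLR_eq : γ.MLR = Finset.image (fun i => (γ.left i, γ.right i)) Finset.univ := rfl
    have hMRL_eq : γ.MRL
        = Finset.image (fun i => (γ.left (finRotate γ.len i), γ.right i)) Finset.univ := rfl
    by_cases hlt : (∑ e ∈ γ.MRL, w e) < (∑ e ∈ γ.MLR, w e)
    · -- the heavy matching is MLR
      rw [if_pos hlt] at hsupp
      have hl' : Function.Injective (fun i => γ.left (finRotate γ.len i)) :=
        γ.left_inj.comp (finRotate γ.len).injective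
      have hX : ∀ i, 1 ≤ B ((fun i => γ.left (finRotate γ.len i))
          (((finRotate γ.len)⁻¹ : Equiv.Perm (Fin γ.len)) i), γ.right i) := by
        intro i
        simp only
        rw [Equiv.Perm.inv_def, Equiv.apply_symm_apply]
        exact hsupp (γ.left i, γ.right i)
          (Finset.mem_image_of_mem _ (Finset.mem_univ i))
      obtain ⟨B'', hval, hrow', hcol', hwt⟩ := swap_lemma w
        (fun i => γ.left (finRotate γ.len i)) γ.right hl' γ.right_inj
        ((finRotate γ.len)⁻¹) B hX
      have himg : Finset.image
          (fun i => ((fun i => γ.left (finRotate γ.len i))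
              (((finRotate γ.len)⁻¹ : Equiv.Perm (Fin γ.len)) i), γ.right i)) Finset.univ
          = γ.MLR := by
        rw [hMLR_eq]
        congr 1
        funext i
        simp only
        rw [Equiv.Perm.inv_def, Equiv.apply_symm_apply]
      rw [himg] at hwt
      have hle := hmin B'' (fun t => (hrow' t).trans (hBL t))
        (fun t => (hcol' t).trans (hBR t))
      rw [hwt, ← hMRL_eq] at hle
      linarith
    · -- the heavy matching is MRL
      rw [if_neg hlt] at hsupp
      have hlt' : (∑ e ∈ γ.MLR, w e) < (∑ e ∈ γ.MRL, w e) :=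
        lt_of_le_of_ne (not_lt.1 hlt) hwne
      have hX : ∀ i, 1 ≤ B (γ.left (finRotate γ.len i), γ.right i) := by
        intro i
        exact hsupp (γ.left (finRotate γ.len i), γ.right i)
          (Finset.mem_image_of_mem _ (Finset.mem_univ i))
      obtain ⟨B'', hval, hrow', hcol', hwt⟩ := swap_lemma w γ.left γ.right
        γ.left_inj γ.right_inj (finRotate γ.len) B hX
      have hle := hmin B'' (fun t => (hrow' t).trans (hBL t))
        (fun t => (hcol' t).trans (hBR t))
      rw [hwt, ← hMLR_eq, ← hMRL_eq] at hle
      linarith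
  · -- no heavy cycle implies minimality
    intro h2 B' hL' hR'
    suffices H : ∀ n (C : T × T → ℕ), (∀ t, ∑ r : T, C (t, r) = yL t) →
        (∀ t, ∑ r : T, C (r, t) = yR t) →
        (∑ e : T × T, Nat.dist (B e) (C e)) = n →
        ∑ e : T × T, (B e : ℝ) * w e ≤ ∑ e : T × T, (C e : ℝ) * w e by
      exact H _ B' hL' hR' rfl
    intro n
    induction n using Nat.strong_induction_on with
    | _ n IH =>
      intro C hCL hCR hn
      by_cases heq : B = C
      · rw [heq]
      · obtain ⟨γ, hMLRlt, hMRLlt⟩ := exists_alt_cycle B C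
          (fun t => (hBL t).trans (hCL t).symm)
          (fun t => (hBR t).trans (hCR t).symm) heq
        have hMLR_eq : γ.MLR
            = Finset.image (fun i => (γ.left i, γ.right i)) Finset.univ := rfl
        have hMRL_eq : γ.MRL
            = Finset.image (fun i => (γ.left (finRotate γ.len i), γ.right i)) Finset.univ := rfl
        have memLR : ∀ e ∈ γ.MLR, C e < B e := by
          intro e he
          rw [hMLR_eq] at he
          obtain ⟨i, -, rfl⟩ := Finset.mem_image.1 he
          exact hMLRlt i
        have memRL : ∀ e ∈ γ.MRL, B e < C e := by
          intro e he
          rw [hMRL_eq] at he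
          obtain ⟨i, -, rfl⟩ := Finset.mem_image.1 he
          exact hMRLlt i
        -- MLR cannot be heavier, else it is a heavy cycle inside the support of B
        have hle : (∑ e ∈ γ.MLR, w e) ≤ (∑ e ∈ γ.MRL, w e) := by
          by_contra hcon
          push_neg at hcon
          refine h2 γ (ne_of_gt hcon) ?_
          rw [if_pos hcon]
          intro e he
          have := memLR e he
          omega
        -- swap C along the cycle
        have hX : ∀ i, 1 ≤ C (γ.left (finRotate γ.len i), γ.right i) := by
          intro i
          have := hMRLlt i
          omega
        obtain ⟨C', hval, hrow', hcol', hwt⟩ := swap_lemma w γ.left γ.right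
          γ.left_inj γ.right_inj (finRotate γ.len) C hX
        rw [← hMLR_eq, ← hMRL_eq] at hwt
        -- the measure strictly decreases
        have hval' : ∀ e : T × T, C' e = C e + (if e ∈ γ.MLR then 1 else 0)
            - (if e ∈ γ.MRL then 1 else 0) := by
          intro e
          rw [hval e, ← hMLR_eq, ← hMRL_eq]
        have hpt : ∀ e : T × T, Nat.dist (B e) (C' e) ≤ Nat.dist (B e) (C e) := by
          intro e
          rw [hval' e]
          by_cases h1 : e ∈ γ.MLR
          · have hc := memLR e h1
            have h2' : e ∉ γ.MRL := by
              intro h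
              have := memRL e h
              omega
            simp only [if_pos h1, if_neg h2', Nat.dist]
            omega
          · by_cases h2' : e ∈ γ.MRL
            · have := memRL e h2'
              simp only [if_pos h2', if_neg h1, Nat.dist]
              omega
            · simp only [if_neg h1, if_neg h2', Nat.dist]
              omega
        have hlen0 : 0 < γ.len := lt_of_lt_of_le Nat.zero_lt_one γ.one_le_len
        set i0 : Fin γ.len := ⟨0, hlen0⟩ with hi0
        set e0 : T × T := (γ.left i0, γ.right i0) with he0
        have he0I1 : e0 ∈ γ.MLR := Finset.mem_image_of_mem _ (Finset.mem_univ i0)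
        have he0I2 : e0 ∉ γ.MRL := by
          intro h
          have h1 := memRL e0 h
          have h2' := memLR e0 he0I1
          omega
        have hstrictpt : Nat.dist (B e0) (C' e0) < Nat.dist (B e0) (C e0) := by
          have hc := memLR e0 he0I1
          rw [hval' e0]
          simp only [if_pos he0I1, if_neg he0I2, Nat.dist]
          omega
        have hstrict : (∑ e : T × T, Nat.dist (B e) (C' e))
            < ∑ e : T × T, Nat.dist (B e) (C e) :=
          Finset.sum_lt_sum (fun e _ => hpt e) ⟨e0, Finset.mem_univ e0, hstrictpt⟩
        have hIH := IH (∑ e : T × T, Nat.dist (B e) (C' e)) (by omega) C'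
          (fun t => (hrow' t).trans (hCL t)) (fun t => (hcol' t).trans (hCR t)) rfl
        calc ∑ e : T × T, (B e : ℝ) * w e ≤ ∑ e : T × T, (C' e : ℝ) * w e := hIH
          _ ≤ ∑ e : T × T, (C e : ℝ) * w e := by rw [hwt]; linarith
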